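/- Fix nonnegative integers a, b, c. Then there exists a constant C > 0 (depending only on (a,b,c)) such that for every ρ ≥ 1 and every failure-probability solution p for parameter ρ: p(a,b,c) ≤ C/ρ. -/

import Mathlib

open scoped BigOperators

/-- A function `p : ℕ³ → [0,1]` is a failure-probability solution for parameter `ρ`:
it vanishes when there are no full fragments, and satisfies the first-step
recursion of the two-locus ancestral recombination graph.  Terms whose
coefficients contain a factor `a` (resp. `b`) vanish automatically when
`a = 0` (resp. `b = 0`) since the coefficients are `0`. -/
def IsFailureSolution (ρ : ℝ) (p : ℕ → ℕ → ℕ → ℝ) : Prop :=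
  (∀ a b c, 0 ≤ p a b c ∧ p a b c ≤ 1) ∧
  (∀ a b, p a b 0 = 0) ∧
  (∀ a b c : ℕ, 1 ≤ c →
    (ρ * c / 2 + (c.choose 2 : ℝ) +
        ((a : ℝ) * b + (a : ℝ) * c + (b : ℝ) * c + (a.choose 2 : ℝ) + (b.choose 2 : ℝ)))
        * p a b c
      = ρ * c / 2 * p (a + 1) (b + 1) (c - 1)
        + (a : ℝ) * (b : ℝ) * p (a - 1) (b - 1) (c + 1)
        + (a : ℝ) * ((a : ℝ) + 2 * (c : ℝ) - 1) / 2 * p (a - 1) b c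
        + (b : ℝ) * ((b : ℝ) + 2 * (c : ℝ) - 1) / 2 * p a (b - 1) c
        + (c.choose 2 : ℝ))

theorem aux : ∀ n : ℕ, ∀ c a b : ℕ, a + b + 2*c = n →
    ∃ C : ℝ, 0 < C ∧ ∀ ρ : ℝ, 1 ≤ ρ → ∀ p : ℕ → ℕ → ℕ → ℝ,
      IsFailureSolution ρ p → p a b c ≤ C / ρ := by
  intro n
  induction n using Nat.strong_induction_on with
  | _ n ih =>
    intro c
    induction c with
    | zero =>
      intro a b _
      refine ⟨1, one_pos, fun ρ hρ p hp => ?_⟩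
      rw [hp.2.1 a b]
      have h0 : (0:ℝ) < ρ := lt_of_lt_of_le one_pos hρ
      positivity
    | succ k ihc =>
      intro a b hn
      obtain ⟨C1, hC1pos, hC1⟩ := ihc (a+1) (b+1) (by omega)
      have hcA : (0:ℝ) ≤ (a:ℝ) * ((a:ℝ) + 2 * ((k:ℝ)+1) - 1) / 2 := by
        have h1 : (0:ℝ) ≤ (a:ℝ) := Nat.cast_nonneg a
        have h2 : (0:ℝ) ≤ (k:ℝ) := Nat.cast_nonneg k
        nlinarith
      have hcB : (0:ℝ) ≤ (b:ℝ) * ((b:ℝ) + 2 * ((k:ℝ)+1) - 1) / 2 := by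
        have h1 : (0:ℝ) ≤ (b:ℝ) := Nat.cast_nonneg b
        have h2 : (0:ℝ) ≤ (k:ℝ) := Nat.cast_nonneg k
        nlinarith
      have h2 : ∃ C2 : ℝ, 0 < C2 ∧ ∀ ρ : ℝ, 1 ≤ ρ → ∀ p : ℕ → ℕ → ℕ → ℝ,
          IsFailureSolution ρ p →
          (a:ℝ) * ((a:ℝ) + 2 * ((k:ℝ)+1) - 1) / 2 * p (a-1) b (k+1)
            ≤ (a:ℝ) * ((a:ℝ) + 2 * ((k:ℝ)+1) - 1) / 2 * (C2 / ρ) := by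
        rcases Nat.eq_zero_or_pos a with h | h
        · refine ⟨1, one_pos, fun ρ hρ p hp => ?_⟩
          subst h; norm_num
        · obtain ⟨C2, hC2pos, hC2⟩ := ih (n-1) (by omega) (k+1) (a-1) b (by omega)
          exact ⟨C2, hC2pos, fun ρ hρ p hp =>
            mul_le_mul_of_nonneg_left (hC2 ρ hρ p hp) hcA⟩
      obtain ⟨C2, hC2pos, hC2⟩ := h2
      have h3 : ∃ C3 : ℝ, 0 < C3 ∧ ∀ ρ : ℝ, 1 ≤ ρ → ∀ p : ℕ → ℕ → ℕ → ℝ,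
          IsFailureSolution ρ p →
          (b:ℝ) * ((b:ℝ) + 2 * ((k:ℝ)+1) - 1) / 2 * p a (b-1) (k+1)
            ≤ (b:ℝ) * ((b:ℝ) + 2 * ((k:ℝ)+1) - 1) / 2 * (C3 / ρ) := by
        rcases Nat.eq_zero_or_pos b with h | h
        · refine ⟨1, one_pos, fun ρ hρ p hp => ?_⟩
          subst h; norm_num
        · obtain ⟨C3, hC3pos, hC3⟩ := ih (n-1) (by omega) (k+1) a (b-1) (by omega)
          exact ⟨C3, hC3pos, fun ρ hρ p hp =>
            mul_le_mul_of_nonneg_left (hC3 ρ hρ p hp) hcB⟩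
      obtain ⟨C3, hC3pos, hC3⟩ := h3
      have hBnn : (0:ℝ) ≤ (((k+1).choose 2 : ℕ) : ℝ) := Nat.cast_nonneg _
      have habnn : (0:ℝ) ≤ (a:ℝ) * (b:ℝ) := by positivity
      have hSnn : 0 ≤ (a:ℝ) * (b:ℝ) + (((k+1).choose 2 : ℕ) : ℝ)
          + (a:ℝ) * ((a:ℝ) + 2 * ((k:ℝ)+1) - 1) / 2 * C2
          + (b:ℝ) * ((b:ℝ) + 2 * ((k:ℝ)+1) - 1) / 2 * C3 := by
        nlinarith [mul_nonneg hcA hC2pos.le, mul_nonneg hcB hC3pos.le]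
      have hk1 : (0:ℝ) < (k:ℝ) + 1 := by positivity
      refine ⟨C1 + 2/((k:ℝ)+1) * ((a:ℝ) * (b:ℝ) + (((k+1).choose 2 : ℕ) : ℝ)
          + (a:ℝ) * ((a:ℝ) + 2 * ((k:ℝ)+1) - 1) / 2 * C2
          + (b:ℝ) * ((b:ℝ) + 2 * ((k:ℝ)+1) - 1) / 2 * C3),
        by positivity, fun ρ hρ p hp => ?_⟩
      have hρ0 : (0:ℝ) < ρ := lt_of_lt_of_le one_pos hρ
      have hrec := hp.2.2 a b (k+1) (Nat.le_add_left 1 k)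
      simp only [Nat.add_sub_cancel, Nat.cast_add, Nat.cast_one] at hrec
      have hb1 : ρ * ((k:ℝ)+1) / 2 * p (a+1) (b+1) k ≤ ((k:ℝ)+1)/2 * C1 := by
        calc ρ * ((k:ℝ)+1) / 2 * p (a+1) (b+1) k
            ≤ ρ * ((k:ℝ)+1) / 2 * (C1 / ρ) :=
              mul_le_mul_of_nonneg_left (hC1 ρ hρ p hp) (by positivity)
          _ = ((k:ℝ)+1)/2 * C1 := by field_simp
      have hb2 : (a:ℝ) * (b:ℝ) * p (a-1) (b-1) (k+1+1) ≤ (a:ℝ) * (b:ℝ) :=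
        mul_le_of_le_one_right habnn (hp.1 _ _ _).2
      have hb3 : (a:ℝ) * ((a:ℝ) + 2 * ((k:ℝ)+1) - 1) / 2 * p (a-1) b (k+1)
          ≤ (a:ℝ) * ((a:ℝ) + 2 * ((k:ℝ)+1) - 1) / 2 * C2 := by
        refine le_trans (hC2 ρ hρ p hp) ?_
        exact mul_le_mul_of_nonneg_left (div_le_self hC2pos.le hρ) hcA
      have hb4 : (b:ℝ) * ((b:ℝ) + 2 * ((k:ℝ)+1) - 1) / 2 * p a (b-1) (k+1)
          ≤ (b:ℝ) * ((b:ℝ) + 2 * ((k:ℝ)+1) - 1) / 2 * C3 := by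
        refine le_trans (hC3 ρ hρ p hp) ?_
        exact mul_le_mul_of_nonneg_left (div_le_self hC3pos.le hρ) hcB
      have hpnn := (hp.1 a b (k+1)).1
      have hRnn : (0:ℝ) ≤ (((k+1).choose 2 : ℕ) : ℝ) + ((a:ℝ) * b + (a:ℝ) * ((k:ℝ)+1)
          + (b:ℝ) * ((k:ℝ)+1) + ((a.choose 2 : ℕ) : ℝ) + ((b.choose 2 : ℕ) : ℝ)) := by
        have h1 : (0:ℝ) ≤ ((a.choose 2 : ℕ) : ℝ) := Nat.cast_nonneg _
        have h2 : (0:ℝ) ≤ ((b.choose 2 : ℕ) : ℝ) := Nat.cast_nonneg _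
        have h3 : (0:ℝ) ≤ (a:ℝ) := Nat.cast_nonneg a
        have h4 : (0:ℝ) ≤ (b:ℝ) := Nat.cast_nonneg b
        nlinarith
      have step1 : ρ * ((k:ℝ)+1) / 2 * p a b (k+1)
          ≤ (ρ * ((k:ℝ)+1) / 2 + (((k+1).choose 2 : ℕ) : ℝ) +
              ((a:ℝ) * b + (a:ℝ) * ((k:ℝ)+1) + (b:ℝ) * ((k:ℝ)+1)
                + ((a.choose 2 : ℕ) : ℝ) + ((b.choose 2 : ℕ) : ℝ))) * p a b (k+1) :=
        mul_le_mul_of_nonneg_right (by linarith) hpnn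
      have key : ρ * ((k:ℝ)+1) / 2 * p a b (k+1)
          ≤ ((k:ℝ)+1)/2 * C1 + ((a:ℝ) * (b:ℝ) + (((k+1).choose 2 : ℕ) : ℝ)
            + (a:ℝ) * ((a:ℝ) + 2 * ((k:ℝ)+1) - 1) / 2 * C2
            + (b:ℝ) * ((b:ℝ) + 2 * ((k:ℝ)+1) - 1) / 2 * C3) := by
        rw [hrec] at step1
        linarith
      rw [le_div_iff₀ hρ0]
      have hhalf : (0:ℝ) < ((k:ℝ)+1)/2 := by positivity
      refine le_of_mul_le_mul_right ?_ hhalf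
      have e1 : p a b (k+1) * ρ * (((k:ℝ)+1)/2) = ρ * ((k:ℝ)+1) / 2 * p a b (k+1) := by ring
      have e2 : (C1 + 2/((k:ℝ)+1) * ((a:ℝ) * (b:ℝ) + (((k+1).choose 2 : ℕ) : ℝ)
          + (a:ℝ) * ((a:ℝ) + 2 * ((k:ℝ)+1) - 1) / 2 * C2
          + (b:ℝ) * ((b:ℝ) + 2 * ((k:ℝ)+1) - 1) / 2 * C3)) * (((k:ℝ)+1)/2)
          = ((k:ℝ)+1)/2 * C1 + ((a:ℝ) * (b:ℝ) + (((k+1).choose 2 : ℕ) : ℝ)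
            + (a:ℝ) * ((a:ℝ) + 2 * ((k:ℝ)+1) - 1) / 2 * C2
            + (b:ℝ) * ((b:ℝ) + 2 * ((k:ℝ)+1) - 1) / 2 * C3) := by
        field_simp
      rw [e1, e2]
      exact key

/-- The probability that the coupling fails, started from `a` left half-fragments,
`b` right half-fragments and `c` full fragments, is `O(1/ρ)`. -/
theorem failure_probability_le_C_div_rho (a b c : ℕ) :
    ∃ C : ℝ, 0 < C ∧ ∀ ρ : ℝ, 1 ≤ ρ → ∀ p : ℕ → ℕ → ℕ → ℝ,
      IsFailureSolution ρ p → p a b c ≤ C / ρ :=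
  aux (a + b + 2*c) c a b rfl
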